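/- Let d ≥ 1 be an integer, C > 0 a real, and θ_0, …, θ_{d−1} reals satisfying |θ_i − iπ/d| ≤ Cπ/d for every 0 ≤ i ≤ d−1. Then for every ℓ ∈ {0,…,d−1} and every real γ with 8(C+1)π/d ≤ γ ≤ π: dγ/(4π) ≤ #{i ∈ {0,…,d−1} : |θ_i − θ_ℓ| ≤ γ/2} ≤ 3dγ/(2π). (This counting statement is the content of the paper's corollary that Jacobi polynomial families are dense: by Szegő's theorem the arccosines θ_i of the roots of the degree-d Jacobi polynomial satisfy the spacing hypothesis with C = C^{α,β}; the constants here are adjusted slightly from (1/(2π), 3/(2π), 8Cπ) so that the bounds also hold for indices ℓ near the boundary.) -/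

import Mathlib

open Classical in
/-- Jacobi polynomial families are dense: counting the root angles falling in
a window around a given root angle, assuming Szegő-type spacing. -/
theorem stmt_17 (d : ℕ) (hd : 1 ≤ d) (C : ℝ) (hC : 0 < C) (θ : Fin d → ℝ)
    (hθ : ∀ i : Fin d, |θ i - (i : ℕ) * Real.pi / d| ≤ C * Real.pi / d)
    (ℓ : Fin d) (γ : ℝ) (hγ1 : 8 * (C + 1) * Real.pi / d ≤ γ) (hγ2 : γ ≤ Real.pi) :
    (d : ℝ) * γ / (4 * Real.pi) ≤
        ((Finset.univ.filter (fun i : Fin d => |θ i - θ ℓ| ≤ γ / 2)).card : ℝ) ∧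
      ((Finset.univ.filter (fun i : Fin d => |θ i - θ ℓ| ≤ γ / 2)).card : ℝ) ≤
        3 * (d : ℝ) * γ / (2 * Real.pi) := by
  have hπ : (0:ℝ) < Real.pi := Real.pi_pos
  have hd' : (0:ℝ) < d := by exact_mod_cast hd
  obtain ⟨p, hpdef⟩ : ∃ p : ℝ, p = Real.pi / d := ⟨_, rfl⟩
  have hp : 0 < p := by rw [hpdef]; positivity
  have hθ' : ∀ i : Fin d, |θ i - (i : ℕ) * p| ≤ C * p := by
    intro i
    have := hθ i
    rw [hpdef]
    rw [show ((i:ℕ):ℝ) * (Real.pi / d) = (i:ℕ) * Real.pi / d by ring,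
      show C * (Real.pi / d) = C * Real.pi / d by ring]
    exact this
  have hγd : 8 * (C + 1) * Real.pi ≤ γ * d := by
    have := (div_le_iff₀ hd').mp hγ1
    linarith
  have hbase : 4 * (C + 1) ≤ (d:ℝ) * γ / (2 * Real.pi) := by
    rw [le_div_iff₀ (by positivity)]
    nlinarith
  obtain ⟨K, hKdef⟩ : ∃ K : ℝ, K = (d:ℝ) * γ / (2 * Real.pi) - 2 * C := ⟨_, rfl⟩
  obtain ⟨M, hMdef⟩ : ∃ M : ℝ, M = (d:ℝ) * γ / (2 * Real.pi) + 2 * C := ⟨_, rfl⟩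
  have hK : 2 * C + 4 ≤ K := by rw [hKdef]; linarith
  have hK0 : 0 ≤ K := by linarith
  have hM0 : 0 ≤ M := by rw [hMdef]; linarith
  have hKp : K * p = γ / 2 - 2 * C * p := by
    rw [hKdef, hpdef]; field_simp
  have hMp : M * p = γ / 2 + 2 * C * p := by
    rw [hMdef, hpdef]; field_simp
  obtain ⟨n, hndef⟩ : ∃ n : ℕ, n = ⌊K⌋₊ := ⟨_, rfl⟩
  have hn : (n:ℝ) ≤ K := by rw [hndef]; exact Nat.floor_le hK0
  have hn1 : K < n + 1 := by rw [hndef]; exact_mod_cast Nat.lt_floor_add_one K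
  obtain ⟨m, hmdef⟩ : ∃ m : ℕ, m = ⌊M⌋₊ := ⟨_, rfl⟩
  have hm : (m:ℝ) ≤ M := by rw [hmdef]; exact Nat.floor_le hM0
  set S := Finset.univ.filter (fun i : Fin d => |θ i - θ ℓ| ≤ γ / 2) with hSdef
  have key : ∀ i : Fin d, |((i:ℕ):ℝ) - ((ℓ:ℕ):ℝ)| ≤ K → i ∈ S := by
    intro i hi
    simp only [hSdef, Finset.mem_filter, Finset.mem_univ, true_and]
    have h1 := abs_le.mp (hθ' i)
    have h2 := abs_le.mp (hθ' ℓ)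
    have h3 := abs_le.mp hi
    rw [abs_le]
    constructor
    · linarith [mul_le_mul_of_nonneg_right h3.1 hp.le, hKp, h1.1, h2.2]
    · linarith [mul_le_mul_of_nonneg_right h3.2 hp.le, hKp, h1.2, h2.1]
  have key2 : ∀ i : Fin d, i ∈ S → |((i:ℕ):ℝ) - ((ℓ:ℕ):ℝ)| ≤ M := by
    intro i hi
    simp only [hSdef, Finset.mem_filter, Finset.mem_univ, true_and] at hi
    have h1 := abs_le.mp (hθ' i)
    have h2 := abs_le.mp (hθ' ℓ)
    have h3 := abs_le.mp hi
    rw [abs_le]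
    constructor
    · have h4 : (-M) * p ≤ (((i:ℕ):ℝ) - ((ℓ:ℕ):ℝ)) * p := by
        linarith [hMp, h1.2, h2.1, h3.1]
      exact le_of_mul_le_mul_right h4 hp
    · have h4 : (((i:ℕ):ℝ) - ((ℓ:ℕ):ℝ)) * p ≤ M * p := by
        linarith [hMp, h1.1, h2.2, h3.2]
      exact le_of_mul_le_mul_right h4 hp
  have hcard : S.card = (S.image Fin.val).card :=
    (Finset.card_image_of_injective S Fin.val_injective).symm
  have hℓd : ℓ.val < d := ℓ.isLt
  constructor
  · -- lower bound
    have hsub : Finset.Icc (ℓ.val - n) (min (d-1) (ℓ.val + n)) ⊆ S.image Fin.val := by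
      intro j hj
      rw [Finset.mem_Icc] at hj
      have hjd : j < d := by omega
      refine Finset.mem_image.mpr ⟨⟨j, hjd⟩, ?_, rfl⟩
      apply key
      have hj1 : j ≤ ℓ.val + n := by omega
      have hj2 : ℓ.val ≤ j + n := by omega
      have hj1' : (j:ℝ) ≤ (ℓ.val:ℝ) + n := by exact_mod_cast hj1
      have hj2' : (ℓ.val:ℝ) ≤ (j:ℝ) + n := by exact_mod_cast hj2
      rw [abs_le]
      refine ⟨?_, ?_⟩ <;> simp only [Fin.val_mk] <;> linarith
    have hc1 : min (d-1) (ℓ.val + n) + 1 - (ℓ.val - n) ≤ S.card := by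
      rw [hcard]
      calc min (d-1) (ℓ.val + n) + 1 - (ℓ.val - n)
          = (Finset.Icc (ℓ.val - n) (min (d-1) (ℓ.val + n))).card := (Nat.card_Icc _ _).symm
        _ ≤ (S.image Fin.val).card := Finset.card_le_card hsub
    have hmin : min (n+1) d ≤ S.card := by omega
    have hminR : (d:ℝ) * γ / (4 * Real.pi) ≤ (min (n+1) d : ℕ) := by
      have heq : (d:ℝ) * γ / (2 * Real.pi) = 2 * ((d:ℝ) * γ / (4 * Real.pi)) := by
        field_simp; ring
      have e1 : (d:ℝ) * γ / (4 * Real.pi) ≤ (n:ℝ) + 1 := by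
        linarith [hn1, hK, hKdef, hbase]
      have e2 : (d:ℝ) * γ / (4 * Real.pi) ≤ (d:ℝ) := by
        rw [div_le_iff₀ (by positivity)]
        nlinarith [mul_le_mul_of_nonneg_left hγ2 hd'.le]
      rcases le_total (n+1) d with h | h
      · rw [min_eq_left h]; push_cast; linarith
      · rw [min_eq_right h]; exact e2
    calc (d:ℝ) * γ / (4 * Real.pi) ≤ (min (n+1) d : ℕ) := hminR
      _ ≤ S.card := by exact_mod_cast hmin
  · -- upper bound
    have hsub : S.image Fin.val ⊆ Finset.Icc (ℓ.val - m) (ℓ.val + m) := by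
      intro j hj
      obtain ⟨i, hiS, rfl⟩ := Finset.mem_image.mp hj
      have h := abs_le.mp (key2 i hiS)
      rw [Finset.mem_Icc]
      have h1 : i.val ≤ ℓ.val + m := by
        rcases le_total i.val ℓ.val with hle | hle
        · omega
        · have hr : ((i.val - ℓ.val : ℕ) : ℝ) ≤ M := by
            push_cast [hle]
            linarith [h.2]
          have := Nat.le_floor hr
          omega
      have h2 : ℓ.val - m ≤ i.val := by
        rcases le_total ℓ.val i.val with hle | hle
        · omega
        · have hr : ((ℓ.val - i.val : ℕ) : ℝ) ≤ M := by
            push_cast [hle]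
            linarith [h.1]
          have := Nat.le_floor hr
          omega
      exact ⟨h2, h1⟩
    have hc : S.card ≤ 2 * m + 1 := by
      rw [hcard]
      calc (S.image Fin.val).card ≤ (Finset.Icc (ℓ.val - m) (ℓ.val + m)).card :=
            Finset.card_le_card hsub
        _ = ℓ.val + m + 1 - (ℓ.val - m) := Nat.card_Icc _ _
        _ ≤ 2 * m + 1 := by omega
    have hcR : (S.card : ℝ) ≤ 2 * (m:ℝ) + 1 := by exact_mod_cast hc
    have e3 : 2 * M + 1 ≤ 3 * (d:ℝ) * γ / (2 * Real.pi) := by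
      have heq : 3 * (d:ℝ) * γ / (2 * Real.pi) = 3 * ((d:ℝ) * γ / (2 * Real.pi)) := by
        ring
      rw [heq, hMdef]
      linarith
    linarith
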